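/- For every positive integer n and all elements x_1, …, x_n of a commutative ring, the following identity holds: 2 · ∑_{σ ∈ S_n} ∑_{S ⊆ {1,…,n}, |S| even} (−1)^{inv(σ)} ∏_{i ∈ S} x_{σ(i)}^{2n−i} ∏_{i ∉ S} x_{σ(i)}^{i−1} = ( ∏_{i=1}^n (1 − x_i) + ∏_{i=1}^n (1 + x_i) ) · ∏_{1 ≤ i < j ≤ n} (x_i − x_j)(x_i x_j − 1). -/
import Mathlib

open Polynomial Finset

section Dickson
variable {A : Type*} [CommRing A]

lemma dickson_facts [Nontrivial A] : ∀ m : ℕ, (dickson 1 (1:A) m).degree ≤ m ∧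
    (1 ≤ m → (dickson 1 (1:A) m).Monic ∧ (dickson 1 (1:A) m).degree = m) := by
  intro m
  induction m using Nat.strong_induction_on with
  | _ m ih =>
    match m with
    | 0 =>
      refine ⟨?_, by omega⟩
      rw [dickson_zero]
      refine le_trans (degree_sub_le _ _) (max_le ?_ ?_)
      · simpa using degree_natCast_le (R := A) 3
      · simpa using degree_natCast_le (R := A) 1
    | 1 =>
      rw [dickson_one]
      exact ⟨by simp, fun _ => ⟨monic_X, by simp⟩⟩
    | (m + 2) =>
      have h1 := (ih (m+1) (by omega))
      have h0 := (ih m (by omega)).1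
      have hm1 : (dickson 1 (1:A) (m+1)).Monic ∧ (dickson 1 (1:A) (m+1)).degree = m+1 :=
        h1.2 (by omega)
      have hXmon : (X * dickson 1 (1:A) (m+1)).Monic := monic_X.mul hm1.1
      have hXdeg : (X * dickson 1 (1:A) (m+1)).degree = ((m : WithBot ℕ) + 2) := by
        rw [hm1.1.degree_mul, degree_X, hm1.2, add_comm, add_assoc]
        rfl
      have hlt : (C (1:A) * dickson 1 (1:A) m).degree < (X * dickson 1 (1:A) (m+1)).degree := by
        rw [hXdeg, map_one, one_mul]
        refine lt_of_le_of_lt h0 ?_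
        exact_mod_cast Nat.cast_lt.mpr (show m < m + 2 by omega)
      rw [dickson_add_two]
      refine ⟨?_, fun _ => ⟨hXmon.sub_of_left hlt, ?_⟩⟩
      · rw [degree_sub_eq_left_of_degree_lt hlt, hXdeg]; push_cast; ring_nf; exact le_refl _
      · rw [degree_sub_eq_left_of_degree_lt hlt, hXdeg]; push_cast; ring_nf

end Dickson

section PQ
variable (A : Type*) [CommRing A]

noncomputable def Ppoly : ℕ → A[X]
  | 0 => 1
  | (m+1) => dickson 1 1 (m+1) + Ppoly m

noncomputable def Qpoly : ℕ → A[X]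
  | 0 => 1
  | (m+1) => dickson 1 1 (m+1) - Qpoly m

variable {A}

lemma PQ_facts [Nontrivial A] : ∀ m : ℕ,
    ((Ppoly A m).Monic ∧ (Ppoly A m).natDegree = m) ∧
    ((Qpoly A m).Monic ∧ (Qpoly A m).natDegree = m) := by
  intro m
  induction m with
  | zero => exact ⟨⟨monic_one, natDegree_one⟩, ⟨monic_one, natDegree_one⟩⟩
  | succ m ih =>
    have hd := (dickson_facts (A := A) (m+1)).2 (by omega)
    have hPd : (Ppoly A m).degree < (dickson 1 (1:A) (m+1)).degree := by
      rw [hd.2]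
      refine lt_of_le_of_lt degree_le_natDegree ?_
      rw [ih.1.2]
      exact_mod_cast Nat.cast_lt.mpr (Nat.lt_succ_self m)
    have hQd : (Qpoly A m).degree < (dickson 1 (1:A) (m+1)).degree := by
      rw [hd.2]
      refine lt_of_le_of_lt degree_le_natDegree ?_
      rw [ih.2.2]
      exact_mod_cast Nat.cast_lt.mpr (Nat.lt_succ_self m)
    have hdeg : (dickson 1 (1:A) (m+1)).natDegree = m + 1 :=
      natDegree_eq_of_degree_eq_some hd.2
    constructor
    · constructor
      · exact hd.1.add_of_left hPd
      · rw [Ppoly]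
        rw [natDegree_eq_of_degree_eq (degree_add_eq_left_of_degree_lt hPd)]
        exact hdeg
    · constructor
      · exact hd.1.sub_of_left hQd
      · rw [Qpoly]
        rw [natDegree_eq_of_degree_eq (degree_sub_eq_left_of_degree_lt hQd)]
        exact hdeg

end PQ

section Eval
variable {F : Type*} [Field F]

lemma eval_Ppoly {x : F} (hx : x ≠ 0) : ∀ m : ℕ,
    x ^ m * (Ppoly F m).eval (x + x⁻¹) = ∑ k ∈ range (2*m+1), x ^ k
  | 0 => by simp [Ppoly]
  | (m+1) => by
    have hD := dickson_one_one_eval_add_inv x x⁻¹ (mul_inv_cancel₀ hx) (m+1)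
    have hinv : x ^ (m+1) * (x⁻¹) ^ (m+1) = 1 := by
      rw [← mul_pow, mul_inv_cancel₀ hx, one_pow]
    have ih := eval_Ppoly hx m
    have hsum : x * ∑ k ∈ range (2*m+1), x ^ k = (∑ k ∈ range (2*m+2), x ^ k) - 1 := by
      rw [Finset.mul_sum]
      rw [Finset.sum_range_succ' (fun k => x ^ k) (2*m+1)]
      simp [pow_succ, mul_comm]
    have e1 : x ^ (m+1) * (x ^ (m+1) + (x⁻¹) ^ (m+1)) = x ^ (2*m+2) + 1 := by
      rw [mul_add, hinv, ← pow_add]; ring_nf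
    have hs2 : ∑ k ∈ range (2*(m+1)+1), x ^ k
        = ∑ k ∈ range (2*m+2), x ^ k + x ^ (2*m+2) := by
      rw [show 2*(m+1)+1 = (2*m+2)+1 by ring, Finset.sum_range_succ]
    rw [Ppoly, eval_add, hD]
    linear_combination e1 + x * ih + hsum - hs2

lemma eval_Qpoly {x : F} (hx : x ≠ 0) : ∀ m : ℕ,
    x ^ m * (Qpoly F m).eval (x + x⁻¹) = ∑ k ∈ range (2*m+1), (-x) ^ k
  | 0 => by simp [Qpoly]
  | (m+1) => by
    have hD := dickson_one_one_eval_add_inv x x⁻¹ (mul_inv_cancel₀ hx) (m+1)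
    have hinv : x ^ (m+1) * (x⁻¹) ^ (m+1) = 1 := by
      rw [← mul_pow, mul_inv_cancel₀ hx, one_pow]
    have ih := eval_Qpoly hx m
    have hsum : -x * ∑ k ∈ range (2*m+1), (-x) ^ k =
        (∑ k ∈ range (2*m+2), (-x) ^ k) - 1 := by
      rw [Finset.mul_sum]
      rw [Finset.sum_range_succ' (fun k => (-x) ^ k) (2*m+1)]
      simp [pow_succ, mul_comm]
    have e1 : x ^ (m+1) * (x ^ (m+1) + (x⁻¹) ^ (m+1)) = x ^ (2*m+2) + 1 := by
      rw [mul_add, hinv, ← pow_add]; ring_nf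
    have hneg : (-x) ^ (2*m+2) = x ^ (2*m+2) := Even.neg_pow ⟨m+1, by ring⟩ x
    have hs2 : ∑ k ∈ range (2*(m+1)+1), (-x) ^ k
        = ∑ k ∈ range (2*m+2), (-x) ^ k + x ^ (2*m+2) := by
      rw [show 2*(m+1)+1 = (2*m+2)+1 by ring, Finset.sum_range_succ, hneg]
    rw [Qpoly, eval_sub, hD]
    linear_combination e1 - x * ih + hsum - hs2

end Eval

section Helpers
variable {F : Type*} [CommRing F]

lemma two_mul_even_sum {ι : Type*} [Fintype ι] [DecidableEq ι] (a b : ι → F) :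
    2 * ∑ S ∈ Finset.univ.filter (fun S : Finset ι => Even S.card),
        (∏ i ∈ S, a i) * ∏ i ∈ Sᶜ, b i
      = ∏ i, (a i + b i) + ∏ i, (b i - a i) := by
  have h3 : ∀ t : Finset ι, (∏ i ∈ t, (-a i)) = (-1 : F)^t.card * ∏ i ∈ t, a i := by
    intro t
    rw [show (fun i => -a i) = fun i => (-1 : F) * a i from funext fun i => by ring,
      Finset.prod_mul_distrib, Finset.prod_const]
  have h1 := Fintype.prod_add a b
  have h2 : ∏ i, (b i - a i) =
      ∑ t : Finset ι, (-1 : F)^t.card * ((∏ i ∈ t, a i) * ∏ i ∈ tᶜ, b i) := by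
    rw [show (fun i => b i - a i) = fun i => (-a i) + b i from funext fun i => by ring]
    rw [Fintype.prod_add (fun i => -a i) b]
    exact Finset.sum_congr rfl fun t _ => by rw [h3]; ring
  rw [h1, h2, ← Finset.sum_add_distrib]
  have h4 : ∀ t : Finset ι,
      (∏ i ∈ t, a i) * ∏ i ∈ tᶜ, b i + (-1:F)^t.card * ((∏ i ∈ t, a i) * ∏ i ∈ tᶜ, b i)
      = if Even t.card then 2 * ((∏ i ∈ t, a i) * ∏ i ∈ tᶜ, b i) else 0 := by
    intro t
    by_cases h : Even t.card
    · rw [if_pos h, h.neg_one_pow]; ring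
    · rw [if_neg h, (Nat.not_even_iff_odd.mp h).neg_one_pow]; ring
  rw [Finset.sum_congr rfl (fun t _ => h4 t), ← Finset.sum_filter, Finset.mul_sum]

end Helpers

section Helpers2
open Finset
variable {F : Type*} [CommRing F] {n : ℕ}

lemma prod_Ioi_rev (g : Fin n → Fin n → F) :
    ∏ i, ∏ j ∈ Ioi i, g (Fin.rev j) (Fin.rev i) = ∏ i, ∏ j ∈ Ioi i, g i j := by
  rw [Finset.prod_sigma' univ (fun i => Ioi i) (fun i j => g (Fin.rev j) (Fin.rev i)),
    Finset.prod_sigma' univ (fun i => Ioi i) (fun i j => g i j)]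
  refine Finset.prod_nbij' (fun p => ⟨Fin.rev p.2, Fin.rev p.1⟩)
    (fun p => ⟨Fin.rev p.2, Fin.rev p.1⟩) ?_ ?_ ?_ ?_ ?_
  · intro p hp
    simp only [Finset.mem_sigma, Finset.mem_univ, Finset.mem_Ioi, true_and] at *
    exact Fin.rev_lt_rev.mpr hp
  · intro p hp
    simp only [Finset.mem_sigma, Finset.mem_univ, Finset.mem_Ioi, true_and] at *
    exact Fin.rev_lt_rev.mpr hp
  · intro p _; simp [Fin.rev_rev]
  · intro p _; simp [Fin.rev_rev]
  · intro p _; rfl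

lemma prod_Ioi_swap (g : Fin n → Fin n → F) :
    ∏ i, ∏ j ∈ Ioi i, g i j = ∏ j, ∏ i ∈ Iio j, g i j := by
  rw [Finset.prod_sigma' univ (fun i => Ioi i) (fun i j => g i j),
    Finset.prod_sigma' univ (fun j => Iio j) (fun j i => g i j)]
  refine Finset.prod_nbij' (fun p => ⟨p.2, p.1⟩) (fun p => ⟨p.2, p.1⟩) ?_ ?_ ?_ ?_ ?_
  · intro p hp
    simp only [Finset.mem_sigma, Finset.mem_univ, Finset.mem_Ioi, Finset.mem_Iio, true_and] at *
    exact hp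
  · intro p hp
    simp only [Finset.mem_sigma, Finset.mem_univ, Finset.mem_Ioi, Finset.mem_Iio, true_and] at *
    exact hp
  · intro p _; rfl
  · intro p _; rfl
  · intro p _; rfl

lemma prod_pow_eq_pairs (x : Fin n → F) :
    ∏ j, x j ^ (n - 1) = ∏ i, ∏ j ∈ Ioi i, (x i * x j) := by
  have h1 : ∀ i : Fin n, ∏ j ∈ Ioi i, (x i * x j) = x i ^ (n - 1 - (i:ℕ)) * ∏ j ∈ Ioi i, x j := by
    intro i
    rw [Finset.prod_mul_distrib, Finset.prod_const, Fin.card_Ioi]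
  have h2 : ∏ i, ∏ j ∈ Ioi i, x j = ∏ j, x j ^ (j : ℕ) := by
    rw [prod_Ioi_swap (fun _ j => x j)]
    exact Finset.prod_congr rfl fun j _ => by rw [Finset.prod_const, Fin.card_Iio]
  rw [Finset.prod_congr rfl fun i _ => h1 i, Finset.prod_mul_distrib, h2,
    ← Finset.prod_mul_distrib]
  refine Finset.prod_congr rfl fun i _ => ?_
  rw [← pow_add]
  congr 1
  omega

lemma geom_minus (z : F) (M : ℕ) : (1 - z) * ∑ l ∈ range M, z ^ l = 1 - z ^ M := by
  have := geom_sum_mul z M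
  linear_combination -this

lemma geom_plus (z : F) (M : ℕ) (hM : Odd M) :
    (1 + z) * ∑ l ∈ range M, (-z) ^ l = 1 + z ^ M := by
  have := geom_minus (-z) M
  rw [hM.neg_pow] at this
  linear_combination this

end Helpers2

open Finset in
theorem key_field {F : Type*} [Field F] (n : ℕ) (hn : 0 < n) (x : Fin n → F)
    (hx : ∀ i, x i ≠ 0) :
    2 * ∑ σ : Equiv.Perm (Fin n),
        ∑ S ∈ Finset.univ.filter (fun S : Finset (Fin n) => Even S.card),
          ((Equiv.Perm.sign σ : ℤ) : F) *
            ((∏ i ∈ S, x (σ i) ^ (2 * n - 1 - (i : ℕ))) *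
              ∏ i ∈ Sᶜ, x (σ i) ^ (i : ℕ)) =
    ((∏ i : Fin n, (1 - x i)) + ∏ i : Fin n, (1 + x i)) *
      ∏ i : Fin n, ∏ j ∈ Finset.Ioi i, ((x i - x j) * (x i * x j - 1)) := by
  classical
  set y : Fin n → F := fun j => x j + (x j)⁻¹ with hy
  set G : Matrix (Fin n) (Fin n) F :=
    Matrix.of (fun j i => x j ^ (i:ℕ) * ∑ l ∈ range (2*(n-1-(i:ℕ))+1), x j ^ l) with hG
  set H : Matrix (Fin n) (Fin n) F :=
    Matrix.of (fun j i => x j ^ (i:ℕ) * ∑ l ∈ range (2*(n-1-(i:ℕ))+1), (- x j) ^ l) with hH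
  set PM : Matrix (Fin n) (Fin n) F :=
    Matrix.of (fun j i => (Ppoly F (n-1-(i:ℕ))).eval (y j)) with hPM
  set QM : Matrix (Fin n) (Fin n) F :=
    Matrix.of (fun j i => (Qpoly F (n-1-(i:ℕ))).eval (y j)) with hQM
  set Mp : Matrix (Fin n) (Fin n) F :=
    Matrix.of (fun j i => x j ^ (2*n-1-(i:ℕ)) + x j ^ (i:ℕ)) with hMp
  set Mm : Matrix (Fin n) (Fin n) F :=
    Matrix.of (fun j i => x j ^ (i:ℕ) - x j ^ (2*n-1-(i:ℕ))) with hMm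
  -- Step A
  have stepA : 2 * ∑ σ : Equiv.Perm (Fin n),
      ∑ S ∈ Finset.univ.filter (fun S : Finset (Fin n) => Even S.card),
        ((Equiv.Perm.sign σ : ℤ) : F) *
          ((∏ i ∈ S, x (σ i) ^ (2 * n - 1 - (i : ℕ))) *
            ∏ i ∈ Sᶜ, x (σ i) ^ (i : ℕ)) = Mp.det + Mm.det := by
    rw [Matrix.det_apply', Matrix.det_apply', ← Finset.sum_add_distrib, Finset.mul_sum]
    refine Finset.sum_congr rfl fun σ _ => ?_
    rw [← Finset.mul_sum, mul_left_comm,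
      two_mul_even_sum (fun i : Fin n => x (σ i) ^ (2*n-1-(i:ℕ)))
        (fun i : Fin n => x (σ i) ^ (i:ℕ)), mul_add]
    rfl
  -- Step B
  have hMmG : Mm.det = (∏ j, (1 - x j)) * G.det := by
    have : Mm = Matrix.of (fun j i => (1 - x j) * G j i) := by
      ext j i
      have hi : (i:ℕ) + (2*(n-1-(i:ℕ))+1) = 2*n-1-(i:ℕ) := by have := i.isLt; omega
      have hg := geom_minus (x j) (2*(n-1-(i:ℕ))+1)
      simp only [hMm, hG, Matrix.of_apply]
      calc x j ^ (i:ℕ) - x j ^ (2*n-1-(i:ℕ))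
          = x j ^ (i:ℕ) * (1 - x j ^ (2*(n-1-(i:ℕ))+1)) := by
            rw [mul_sub, mul_one, ← pow_add, hi]
        _ = (1 - x j) * (x j ^ (i:ℕ) * ∑ l ∈ range (2*(n-1-(i:ℕ))+1), x j ^ l) := by
            rw [← hg]; ring
    rw [this]
    exact Matrix.det_mul_column (fun j => 1 - x j) G
  have hMpH : Mp.det = (∏ j, (1 + x j)) * H.det := by
    have : Mp = Matrix.of (fun j i => (1 + x j) * H j i) := by
      ext j i
      have hi : (i:ℕ) + (2*(n-1-(i:ℕ))+1) = 2*n-1-(i:ℕ) := by have := i.isLt; omega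
      have hg := geom_plus (x j) (2*(n-1-(i:ℕ))+1) ⟨n-1-(i:ℕ), by ring⟩
      simp only [hMp, hH, Matrix.of_apply]
      calc x j ^ (2*n-1-(i:ℕ)) + x j ^ (i:ℕ)
          = x j ^ (i:ℕ) * (1 + x j ^ (2*(n-1-(i:ℕ))+1)) := by
            rw [mul_add, mul_one, ← pow_add, hi]; ring
        _ = (1 + x j) * (x j ^ (i:ℕ) * ∑ l ∈ range (2*(n-1-(i:ℕ))+1), (- x j) ^ l) := by
            rw [← hg]; ring
    rw [this]
    exact Matrix.det_mul_column (fun j => 1 + x j) H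
  -- Step C
  have hGP : G.det = (∏ j, x j ^ (n-1)) * PM.det := by
    have : G = Matrix.of (fun j i => x j ^ (n-1) * PM j i) := by
      ext j i
      have hi : (i:ℕ) + (n-1-(i:ℕ)) = n-1 := by have := i.isLt; omega
      simp only [hG, hPM, Matrix.of_apply]
      rw [← eval_Ppoly (hx j) (n-1-(i:ℕ)), ← mul_assoc, ← pow_add, hi]
    rw [this]
    exact Matrix.det_mul_column (fun j => x j ^ (n-1)) PM
  have hHQ : H.det = (∏ j, x j ^ (n-1)) * QM.det := by
    have : H = Matrix.of (fun j i => x j ^ (n-1) * QM j i) := by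
      ext j i
      have hi : (i:ℕ) + (n-1-(i:ℕ)) = n-1 := by have := i.isLt; omega
      simp only [hH, hQM, Matrix.of_apply]
      rw [← eval_Qpoly (hx j) (n-1-(i:ℕ)), ← mul_assoc, ← pow_add, hi]
    rw [this]
    exact Matrix.det_mul_column (fun j => x j ^ (n-1)) QM
  -- Step D
  have hdegP : ∀ i : Fin n, ((fun k : Fin n => Ppoly F (k:ℕ)) i).natDegree = (i:ℕ) :=
    fun i => ((PQ_facts (A := F) (i:ℕ)).1).2
  have hmonP : ∀ i : Fin n, ((fun k : Fin n => Ppoly F (k:ℕ)) i).Monic :=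
    fun i => ((PQ_facts (A := F) (i:ℕ)).1).1
  have hdegQ : ∀ i : Fin n, ((fun k : Fin n => Qpoly F (k:ℕ)) i).natDegree = (i:ℕ) :=
    fun i => ((PQ_facts (A := F) (i:ℕ)).2).2
  have hmonQ : ∀ i : Fin n, ((fun k : Fin n => Qpoly F (k:ℕ)) i).Monic :=
    fun i => ((PQ_facts (A := F) (i:ℕ)).2).1
  have hrev : ∀ i : Fin n, n - 1 - ((Fin.revPerm i : Fin n) : ℕ) = (i : ℕ) := by
    intro i
    have h1 := i.isLt
    have h2 : ((Fin.revPerm i : Fin n) : ℕ) = n - (i + 1) := rfl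
    omega
  have hPMdet : PM.det = ∏ i, ∏ j ∈ Ioi i, (y i - y j) := by
    rw [← Matrix.det_submatrix_equiv_self Fin.revPerm PM]
    have hsub : PM.submatrix Fin.revPerm Fin.revPerm
        = Matrix.of (fun j i => ((fun k : Fin n => Ppoly F (k:ℕ)) i).eval ((y ∘ Fin.rev) j)) := by
      ext j i
      simp only [Matrix.submatrix_apply, hPM, Matrix.of_apply, Function.comp]
      rw [hrev i]
      rfl
    rw [hsub, ← Matrix.det_eval_matrixOfPolynomials_eq_det_vandermonde (y ∘ Fin.rev)
        (fun k : Fin n => Ppoly F (k:ℕ)) hdegP hmonP, Matrix.det_vandermonde]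
    exact prod_Ioi_rev (fun a b => y a - y b)
  have hQMdet : QM.det = ∏ i, ∏ j ∈ Ioi i, (y i - y j) := by
    rw [← Matrix.det_submatrix_equiv_self Fin.revPerm QM]
    have hsub : QM.submatrix Fin.revPerm Fin.revPerm
        = Matrix.of (fun j i => ((fun k : Fin n => Qpoly F (k:ℕ)) i).eval ((y ∘ Fin.rev) j)) := by
      ext j i
      simp only [Matrix.submatrix_apply, hQM, Matrix.of_apply, Function.comp]
      rw [hrev i]
      rfl
    rw [hsub, ← Matrix.det_eval_matrixOfPolynomials_eq_det_vandermonde (y ∘ Fin.rev)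
        (fun k : Fin n => Qpoly F (k:ℕ)) hdegQ hmonQ, Matrix.det_vandermonde]
    exact prod_Ioi_rev (fun a b => y a - y b)
  -- Step E
  have stepE : (∏ j, x j ^ (n-1)) * ∏ i, ∏ j ∈ Ioi i, (y i - y j)
      = ∏ i : Fin n, ∏ j ∈ Ioi i, ((x i - x j) * (x i * x j - 1)) := by
    rw [prod_pow_eq_pairs x, ← Finset.prod_mul_distrib]
    refine Finset.prod_congr rfl fun i _ => ?_
    rw [← Finset.prod_mul_distrib]
    refine Finset.prod_congr rfl fun j _ => ?_
    simp only [hy]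
    have hxi := hx i
    have hxj := hx j
    field_simp
    ring
  rw [stepA, hMmG, hMpH, hGP, hHQ, hPMdet, hQMdet, ← mul_assoc, ← mul_assoc,
    mul_assoc (∏ j, (1 + x j)), stepE, mul_assoc (∏ j, (1 - x j)), stepE]
  ring

lemma map_lhs {A B : Type*} [CommRing A] [CommRing B] (f : A →+* B) {n : ℕ} (x : Fin n → A) :
    f (2 * ∑ σ : Equiv.Perm (Fin n),
        ∑ S ∈ Finset.univ.filter (fun S : Finset (Fin n) => Even S.card),
          ((Equiv.Perm.sign σ : ℤ) : A) *
            ((∏ i ∈ S, x (σ i) ^ (2 * n - 1 - (i : ℕ))) *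
              ∏ i ∈ Sᶜ, x (σ i) ^ (i : ℕ)))
    = 2 * ∑ σ : Equiv.Perm (Fin n),
        ∑ S ∈ Finset.univ.filter (fun S : Finset (Fin n) => Even S.card),
          ((Equiv.Perm.sign σ : ℤ) : B) *
            ((∏ i ∈ S, f (x (σ i)) ^ (2 * n - 1 - (i : ℕ))) *
              ∏ i ∈ Sᶜ, f (x (σ i)) ^ (i : ℕ)) := by
  simp [map_mul, map_sum, map_prod, map_pow, map_intCast, map_ofNat]

lemma map_rhs {A B : Type*} [CommRing A] [CommRing B] (f : A →+* B) {n : ℕ} (x : Fin n → A) :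
    f (((∏ i : Fin n, (1 - x i)) + ∏ i : Fin n, (1 + x i)) *
      ∏ i : Fin n, ∏ j ∈ Finset.Ioi i, ((x i - x j) * (x i * x j - 1)))
    = ((∏ i : Fin n, (1 - f (x i))) + ∏ i : Fin n, (1 + f (x i))) *
      ∏ i : Fin n, ∏ j ∈ Finset.Ioi i, ((f (x i) - f (x j)) * (f (x i) * f (x j) - 1)) := by
  simp [map_mul, map_sum, map_prod, map_add, map_sub, map_one]

/-- Equation (4.1) of the paper: the restriction of the `B_n` Weyl denominator formula
to subsets of even cardinality, multiplied through by `2 ∏ x_i^{(2n-1)/2}` to clear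
half-integer powers.  With 0-indexed `i`, the exponent `2n - i` becomes `2n - 1 - i`
and `i - 1` becomes `i`; `(-1)^{inv σ}` is the sign of the permutation `σ`. -/
theorem weyl_denominator_Bn_even_subsets (n : ℕ) (hn : 0 < n) (R : Type*) [CommRing R]
    (x : Fin n → R) :
    2 * ∑ σ : Equiv.Perm (Fin n),
        ∑ S ∈ Finset.univ.filter (fun S : Finset (Fin n) => Even S.card),
          ((Equiv.Perm.sign σ : ℤ) : R) *
            ((∏ i ∈ S, x (σ i) ^ (2 * n - 1 - (i : ℕ))) *
              ∏ i ∈ Sᶜ, x (σ i) ^ (i : ℕ)) =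
    ((∏ i : Fin n, (1 - x i)) + ∏ i : Fin n, (1 + x i)) *
      ∏ i : Fin n, ∏ j ∈ Finset.Ioi i, ((x i - x j) * (x i * x j - 1)) := by
  classical
  set A := MvPolynomial (Fin n) ℤ with hA
  let K := FractionRing A
  let ψ : A →+* K := algebraMap A K
  have hinj : Function.Injective ψ := IsFractionRing.injective A K
  have hX : ∀ i : Fin n, ψ (MvPolynomial.X i) ≠ 0 := fun i =>
    (map_ne_zero_iff ψ hinj).mpr (MvPolynomial.X_ne_zero i)
  have hK := key_field n hn (fun i => ψ (MvPolynomial.X i)) hX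
  have hApoly :
      2 * ∑ σ : Equiv.Perm (Fin n),
        ∑ S ∈ Finset.univ.filter (fun S : Finset (Fin n) => Even S.card),
          ((Equiv.Perm.sign σ : ℤ) : A) *
            ((∏ i ∈ S, (MvPolynomial.X (σ i) : A) ^ (2 * n - 1 - (i : ℕ))) *
              ∏ i ∈ Sᶜ, (MvPolynomial.X (σ i) : A) ^ (i : ℕ)) =
      ((∏ i : Fin n, (1 - (MvPolynomial.X i : A))) + ∏ i : Fin n, (1 + (MvPolynomial.X i : A))) *
        ∏ i : Fin n, ∏ j ∈ Finset.Ioi i,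
          (((MvPolynomial.X i : A) - MvPolynomial.X j) *
            ((MvPolynomial.X i : A) * MvPolynomial.X j - 1)) := by
    apply hinj
    rw [map_lhs ψ, map_rhs ψ]
    exact hK
  have hmap := congrArg (MvPolynomial.eval₂Hom (Int.castRingHom R) x) hApoly
  rw [map_lhs, map_rhs] at hmap
  simpa using hmap
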